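/- arXiv:math/9506205 — 2 statements merged into one kernel-verified Lean document; each statement's English description precedes it below -/
import Mathlib

section
/- If G is a recursively presented finitely generated group admitting a rational structure with uniqueness (a regular language L over a finite inverse-closed generating alphabet A mapping bijectively onto G under the natural evaluation map), then the word problem for G is solvable: the set of words over A representing the identity is decidable. -/
open Nat.Partrec (Code)
open Nat.Partrec.Code

/-- RE preds are closed under precomposition with computable functions. -/
theorem RePred.comp' {α β} [Primcodable α] [Primcodable β] {p : β → Prop} (hp : REPred p)
    {f : α → β} (hf : Computable f) : REPred fun a => p (f a) :=
  Partrec.comp hp hf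

/-- RE preds are closed under conjunction with computable preds. -/
theorem RePred.and_computable {α} [Primcodable α] {p q : α → Prop}
    (hp : ComputablePred p) (hq : REPred q) : REPred fun a => p a ∧ q a := by
  have hp' : REPred p := hp.to_re
  have := Partrec.bind (f := fun a => Part.assert (p a) fun _ => Part.some ())
    (g := fun a (_ : Unit) => Part.assert (q a) fun _ => Part.some ()) hp'
    (hq.comp Computable.fst)
  refine (Partrec.dom_re this).of_eq fun a => ?_
  simp [Part.dom_iff_mem]

/-- RE preds are closed under existential quantification over a primcodable type
(dovetailing). -/
theorem RePred.exists' {α β} [Primcodable α] [Primcodable β] {q : α × β → Prop}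
    (hq : REPred q) : REPred fun b : β => ∃ a : α, q (a, b) := by
  obtain ⟨c, hc⟩ := exists_code.1 hq
  have key : ∀ p : α × β, q p ↔ (eval c (Encodable.encode p)).Dom := by
    intro p
    rw [hc]
    simp [Encodable.encodek, Part.assert]
  have hD : Primrec fun p : β × ℕ =>
      (Option.bind (Encodable.decode (α := α) p.2.unpair.1) fun a =>
        evaln p.2.unpair.2 c (Encodable.encode (a, p.1))).map fun _ => () := by
    apply Primrec.option_map
    · refine Primrec.option_bind
        (Primrec.decode.comp ((Primrec.fst.comp Primrec.unpair).comp Primrec.snd)) ?_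
      have inner : Primrec fun q : (β × ℕ) × α =>
          evaln q.1.2.unpair.2 c (Encodable.encode (q.2, q.1.1)) := by
        refine primrec_evaln.comp (Primrec.pair (Primrec.pair ?_ (Primrec.const c)) ?_)
        · exact (Primrec.snd.comp Primrec.unpair).comp
            (Primrec.snd.comp (Primrec.fst (α := β × ℕ) (β := α)))
        · exact Primrec.encode.comp (Primrec.pair Primrec.snd (Primrec.fst.comp Primrec.fst))
      exact inner
    · exact Primrec.const () |>.comp Primrec.fst |>.to₂
  have hD2 : Computable₂ fun (b : β) (m : ℕ) =>
      (Option.bind (Encodable.decode (α := α) m.unpair.1) fun a =>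
        evaln m.unpair.2 c (Encodable.encode (a, b))).map fun _ => () := hD.to_comp
  have := Partrec.dom_re (Partrec.rfindOpt hD2)
  refine this.of_eq fun b => ?_
  rw [Nat.rfindOpt_dom]
  constructor
  · rintro ⟨n, u, hu⟩
    simp only [Option.mem_def, Option.map_eq_some_iff] at hu
    obtain ⟨x, hx, -⟩ := hu
    rw [Option.bind_eq_some_iff] at hx
    obtain ⟨a, ha, hev⟩ := hx
    exact ⟨a, (key (a, b)).2 (Part.dom_iff_mem.2 ⟨x, evaln_sound hev⟩)⟩
  · rintro ⟨a, ha⟩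
    obtain ⟨x, hx⟩ := Part.dom_iff_mem.1 ((key (a, b)).1 ha)
    obtain ⟨k, hk⟩ := evaln_complete.1 hx
    refine ⟨Nat.pair (Encodable.encode a) k, (), ?_⟩
    simp only [Nat.unpair_pair, Encodable.encodek, Option.bind_some, Option.mem_def,
      Option.map_eq_some_iff, Option.bind_eq_some_iff]
    exact ⟨x, hk, trivial⟩

/-- Evaluation of a word over the alphabet `A` in the group `G`. -/
def evalWord {A G : Type} [Group G] (a : A → G) (w : List A) : G :=
  (w.map a).prod

/-- A language is regular if it is accepted by a DFA with finitely many states. -/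
def IsRegularLang {A : Type} (L : Language A) : Prop :=
  ∃ (σ : Type) (_ : Fintype σ) (M : DFA A σ), M.accepts = L

theorem evalWord_append {A G : Type} [Group G] (a : A → G) (u v : List A) :
    evalWord a (u ++ v) = evalWord a u * evalWord a v := by
  simp [evalWord]

/-- Membership in a regular language is computably decidable. -/
theorem isRegularLang_computable {A : Type} [Fintype A] [Primcodable A] {L : Language A}
    (hreg : IsRegularLang L) :
    ∃ B : List A → Bool, Computable B ∧ ∀ w, B w = true ↔ w ∈ L := by
  classical
  obtain ⟨σ, hfin, M, hM⟩ := hreg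
  let e : σ ≃ Fin (@Fintype.card σ hfin) := @Fintype.equivFin σ hfin
  let step2 : Fin (@Fintype.card σ hfin) × A → Fin (@Fintype.card σ hfin) :=
    fun p => e (M.step (e.symm p.1) p.2)
  let acc : Fin (@Fintype.card σ hfin) → Bool := fun s => decide (e.symm s ∈ M.accept)
  refine ⟨fun w => acc (w.foldl (fun s x => step2 (s, x)) (e M.start)), ?_, ?_⟩
  · refine (Primrec.to_comp ?_)
    refine Primrec.comp (Primrec.dom_finite acc) ?_
    exact Primrec.list_foldl Primrec.id (Primrec.const (e M.start))
      ((Primrec.dom_finite step2).comp Primrec.snd)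
  · intro w
    show acc (w.foldl (fun s x => step2 (s, x)) (e M.start)) = true ↔ w ∈ L
    have fold : ∀ (w : List A) (s : σ),
        w.foldl (fun s x => step2 (s, x)) (e s) = e (M.evalFrom s w) := by
      intro w
      induction w with
      | nil => intro s; rfl
      | cons x t ih =>
        intro s
        simp only [List.foldl_cons, DFA.evalFrom]
        have h1 : step2 (e s, x) = e (M.step s x) := by simp [step2]
        rw [h1, ih (M.step s x)]
        rfl
    rw [fold w M.start]
    simp only [acc, Equiv.symm_apply_apply, decide_eq_true_eq]
    rw [← hM]
    rfl

/-- If a recursively presented finitely generated group admits a rational structure with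
uniqueness, then its word problem is solvable. -/
theorem word_problem_solvable_of_rational_structure_with_uniqueness
    {A G : Type} [Fintype A] [Primcodable A] [Group G] (a : A → G)
    (hinv : ∀ x : A, ∃ y : A, a y = (a x)⁻¹)
    (hrecpres : REPred (fun w : List A => evalWord a w = 1))
    (L : Language A) (hreg : IsRegularLang L)
    (hbij : ∀ g : G, ∃! w, w ∈ L ∧ evalWord a w = g) :
    ComputablePred (fun w : List A => evalWord a w = 1) := by
  classical
  choose i hi using hinv
  have inv_eval : ∀ v : List A, evalWord a (v.reverse.map i) = (evalWord a v)⁻¹ := by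
    intro v
    induction v with
    | nil => simp [evalWord]
    | cons x t ih =>
      have h1 : (x :: t).reverse.map i = t.reverse.map i ++ [i x] := by simp
      rw [h1, evalWord_append, ih]
      simp [evalWord, hi, mul_inv_rev]
  obtain ⟨w₀, ⟨hw₀L, hw₀1⟩, hw₀u⟩ := hbij 1
  obtain ⟨B, hBcomp, hB⟩ := isRegularLang_computable hreg
  have compl_iff : ∀ w : List A, ¬ evalWord a w = 1 ↔
      ∃ v : List A, ((B v && decide (v ≠ w₀)) = true ∧
        evalWord a (v.reverse.map i ++ w) = 1) := by
    intro w
    constructor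
    · intro hne
      obtain ⟨v, ⟨hvL, hv⟩, -⟩ := hbij (evalWord a w)
      refine ⟨v, ?_, ?_⟩
      · simp only [Bool.and_eq_true, decide_eq_true_eq]
        refine ⟨(hB v).2 hvL, fun h => hne ?_⟩
        rw [← hv, h]; exact hw₀1
      · rw [evalWord_append, inv_eval, hv, inv_mul_cancel]
    · rintro ⟨v, hcond, hev⟩ hw1
      simp only [Bool.and_eq_true, decide_eq_true_eq] at hcond
      obtain ⟨hvB, hvne⟩ := hcond
      rw [evalWord_append, inv_eval, hw1, mul_one, inv_eq_one] at hev
      exact hvne (hw₀u v ⟨(hB v).1 hvB, hev⟩)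
  have hCcomp : ComputablePred fun p : List A × List A =>
      (B p.1 && decide (p.1 ≠ w₀)) = true := by
    refine ComputablePred.computable_iff.2 ⟨fun p => B p.1 && decide (p.1 ≠ w₀), ?_, rfl⟩
    have h1 : Computable fun p : List A × List A => B p.1 := hBcomp.comp Computable.fst
    have h2 : Primrec fun p : List A × List A => decide (p.1 ≠ w₀) := by
      have := Primrec.not.comp ((Primrec.eq (α := List A)).comp
        (Primrec.fst (α := List A) (β := List A)) (Primrec.const w₀)).decide
      exact this.of_eq fun p => by simp
    refine (Computable.cond h1 h2.to_comp (Computable.const false)).of_eq fun p => ?_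
    cases hb : B p.1 <;> simp [hb]
  have hconcat : Computable fun p : List A × List A => p.1.reverse.map i ++ p.2 := by
    refine Primrec.to_comp ?_
    have h1 : Primrec fun p : List A × List A => p.1.reverse.map i :=
      Primrec.list_map (Primrec.list_reverse.comp Primrec.fst)
        ((Primrec.dom_finite i).comp Primrec.snd)
    exact (Primrec.list_append (α := A)).comp h1 Primrec.snd
  have hq : REPred fun p : List A × List A =>
      (B p.1 && decide (p.1 ≠ w₀)) = true ∧ evalWord a (p.1.reverse.map i ++ p.2) = 1 :=
    RePred.and_computable hCcomp (RePred.comp' hrecpres hconcat)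
  have hcompl : REPred fun w : List A => ¬ evalWord a w = 1 :=
    (RePred.exists' hq).of_eq fun w => (compl_iff w).symm
  exact ComputablePred.computable_iff_re_compl_re'.2 ⟨hrecpres, hcompl⟩
end

section
/- Let (L, A) be a rational structure on a group G and H ≤ G a subgroup. If H is L-rational (L ∩ π^{-1}(H) is a regular language), then H is L-quasiconvex: there exists K > 0 such that for every w ∈ L with π(w) ∈ H and every prefix w_t of w, there is a word u_t over A of length at most K with π(w_t u_t) ∈ H. -/
lemma shorten_accept {A σ : Type} [Fintype σ] (M : DFA A σ) (s : σ) :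
    ∀ t : List A, M.evalFrom s t ∈ M.accept →
      ∃ u : List A, u.length ≤ Fintype.card σ ∧ M.evalFrom s u ∈ M.accept := by
  suffices h : ∀ n, ∀ t : List A, t.length = n → M.evalFrom s t ∈ M.accept →
      ∃ u : List A, u.length ≤ Fintype.card σ ∧ M.evalFrom s u ∈ M.accept by
    intro t; exact h t.length t rfl
  intro n
  induction n using Nat.strong_induction_on with
  | _ n ih =>
    intro t hn ht
    by_cases hlen : t.length ≤ Fintype.card σ
    · exact ⟨t, hlen, ht⟩
    · obtain ⟨q, x, y, z, hx, hxy, hy, h1, h2, h3⟩ :=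
        M.evalFrom_split (x := t) (s := s) (t := M.evalFrom s t) (le_of_not_ge hlen) rfl
      have hshort : (x ++ z).length < t.length := by
        subst hx
        simp only [List.length_append]
        have : 0 < y.length := List.length_pos_iff.2 hy
        omega
      have heval : M.evalFrom s (x ++ z) = M.evalFrom s t := by
        rw [M.evalFrom_of_append, h1, h3]
      exact ih (x ++ z).length (hn ▸ hshort) (x ++ z) rfl (heval ▸ ht)

/-- An `L`-rational subgroup is `L`-quasiconvex. -/
theorem quasiconvex_of_rational
    {A G : Type} [Fintype A] [Group G] (a : A → G)
    (hinv : ∀ x : A, ∃ y : A, a y = (a x)⁻¹)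
    (L : Language A) (hreg : IsRegularLang L)
    (hsur : ∀ g : G, ∃ w ∈ L, evalWord a w = g)
    (H : Subgroup G)
    (hrat : IsRegularLang {w | w ∈ L ∧ evalWord a w ∈ H}) :
    ∃ K : ℕ, 0 < K ∧ ∀ w ∈ L, evalWord a w ∈ H → ∀ p : List A, p <+: w →
      ∃ u : List A, u.length ≤ K ∧ evalWord a (p ++ u) ∈ H := by
  obtain ⟨σ, hfin, M, hM⟩ := hrat
  refine ⟨Fintype.card σ + 1, Nat.succ_pos _, ?_⟩
  intro w hw hH p hpre
  obtain ⟨t, rfl⟩ := hpre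
  have hacc : (p ++ t) ∈ M.accepts := by rw [hM]; exact ⟨hw, hH⟩
  rw [DFA.mem_accepts, DFA.eval, M.evalFrom_of_append] at hacc
  obtain ⟨u, hu, huacc⟩ := shorten_accept M (M.eval p) t hacc
  have : (p ++ u) ∈ M.accepts := by
    rw [DFA.mem_accepts, DFA.eval, M.evalFrom_of_append]; exact huacc
  rw [hM] at this
  exact ⟨u, le_trans hu (Nat.le_succ _), this.2⟩
end
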